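/- Let b ∈ ℝ^s with all b_i ≠ 0, B = diag(b), and A ∈ ℝ^{s×s} with Â = (𝟙_{s×s} − B⁻¹Aᵀ)B. Suppose A satisfies D(ζ): ∑_i b_i c_i^{k−1} A_{i,j} = (b_j/k)(1 − c_j^k) for all j and 1 ≤ k ≤ ζ, and B(ζ): ∑_i b_i c_i^{k−1} = 1/k for 1 ≤ k ≤ ζ. Then Â satisfies C(ζ): ∑_j Â_{i,j} c_j^{k−1} = c_i^k / k for all i and 1 ≤ k ≤ ζ. -/

import Mathlib

open Matrix

/-- The symplectic conjugate of a method satisfying `D(ζ)` (together with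
quadrature order `ζ`) satisfies the stage-order condition `C(ζ)`. -/
theorem conjugate_D_implies_C (s ζ : ℕ)
    (b c : Fin s → ℝ) (hb : ∀ i, b i ≠ 0)
    (A Ahat : Matrix (Fin s) (Fin s) ℝ)
    (hAhat : Ahat =
      ((Matrix.of fun _ _ => (1 : ℝ)) - (Matrix.diagonal b)⁻¹ * Aᵀ) * Matrix.diagonal b)
    (hD : ∀ (j : Fin s) (k : ℕ), 1 ≤ k → k ≤ ζ →
      ∑ i, b i * (c i) ^ (k - 1) * A i j = b j / (k : ℝ) * (1 - (c j) ^ k))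
    (hB : ∀ k : ℕ, 1 ≤ k → k ≤ ζ → ∑ i, b i * (c i) ^ (k - 1) = 1 / (k : ℝ)) :
    ∀ (i : Fin s) (k : ℕ), 1 ≤ k → k ≤ ζ →
      ∑ j, Ahat i j * (c j) ^ (k - 1) = (c i) ^ k / (k : ℝ) := by
  intro i k hk1 hk2
  have hdiaginv : (Matrix.diagonal b)⁻¹ = Matrix.diagonal (fun i => (b i)⁻¹) := by
    refine Matrix.inv_eq_right_inv ?_
    rw [Matrix.diagonal_mul_diagonal]
    simp [Matrix.diagonal_one, mul_inv_cancel₀, hb]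
  have hentry : ∀ j, Ahat i j = (1 - (b i)⁻¹ * A j i) * b j := by
    intro j
    simp [hAhat, hdiaginv, Matrix.mul_apply, Matrix.diagonal_apply, Finset.sum_ite_eq,
      Matrix.sub_apply, Matrix.transpose_apply]
  have hknz : (k : ℝ) ≠ 0 := by positivity
  calc ∑ j, Ahat i j * (c j) ^ (k - 1)
      = (∑ j, b j * (c j) ^ (k-1)) - (b i)⁻¹ * ∑ j, b j * (c j) ^ (k-1) * A j i := by
        rw [Finset.mul_sum, ← Finset.sum_sub_distrib]
        refine Finset.sum_congr rfl fun j _ => ?_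
        rw [hentry j]; ring
    _ = 1 / (k:ℝ) - (b i)⁻¹ * (b i / (k:ℝ) * (1 - (c i)^k)) := by
        rw [hB k hk1 hk2, hD i k hk1 hk2]
    _ = (c i) ^ k / (k : ℝ) := by
        field_simp [hb i]
        ring
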